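/- arXiv:1801.07765 — 2 statements merged into one kernel-verified Lean document; each statement's English description precedes it below -/
import Mathlib

section
/- Let P be a strictly positive probability distribution on {0,1}^B satisfying P(x) = ∏_{j=1}^k P_{C_j}(x_{C_j}) for a partition {C_1,...,C_k} of {1,...,B}. Then the coefficients u_C in the expansion log P(x) = u_∅ + Σ_{∅≠C⊆{1,...,B}} u_C ∏_{i∈C} x_i vanish for every nonempty C that is not contained in any block C_j. -/
open Finset

/-- Marginal of a real-valued table `P` over coordinates in `C`. -/
noncomputable def marg {B : ℕ} (P : (Fin B → Bool) → ℝ) (C : Finset (Fin B))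
    (x : Fin B → Bool) : ℝ :=
  ∑ z : Fin B → Bool, if ∀ i ∈ C, z i = x i then P z else 0

/-- Marginal count table of a contingency table `n` over coordinates in `C`. -/
def margN {B : ℕ} (n : (Fin B → Bool) → ℕ) (C : Finset (Fin B))
    (x : Fin B → Bool) : ℕ :=
  ∑ z : Fin B → Bool, if ∀ i ∈ C, z i = x i then n z else 0

private lemma real_sum_powerset_neg_one_pow_card {α : Type*} [DecidableEq α] {x : Finset α} :
    (∑ m ∈ x.powerset, (-1 : ℝ) ^ m.card) = if x = ∅ then 1 else 0 := by
  have := @Finset.sum_powerset_neg_one_pow_card α _ x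
  have h2 : ((∑ m ∈ x.powerset, (-1 : ℤ) ^ m.card : ℤ) : ℝ)
      = ∑ m ∈ x.powerset, (-1 : ℝ) ^ m.card := by push_cast; ring_nf
  rw [← h2, this]
  split <;> norm_num

/-- Möbius inversion over subsets. -/
private lemma mobius_aux {α : Type*} [DecidableEq α]
    (u : Finset α → ℝ) (e : Finset α → ℝ) (C : Finset α)
    (h : ∀ S ∈ C.powerset, e S = ∑ T ∈ S.powerset, u T) :
    u C = ∑ S ∈ C.powerset, (-1 : ℝ) ^ (C \ S).card * e S := by
  symm
  have step1 : ∀ S ∈ C.powerset, (∑ T ∈ S.powerset, u T)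
      = ∑ T ∈ C.powerset, (if T ⊆ S then u T else 0) := by
    intro S hS
    rw [mem_powerset] at hS
    rw [← Finset.sum_filter]
    congr 1
    ext T
    simp only [mem_filter, mem_powerset]
    exact ⟨fun h => ⟨h.trans hS, h⟩, fun h => h.2⟩
  calc ∑ S ∈ C.powerset, (-1 : ℝ) ^ (C \ S).card * e S
      = ∑ S ∈ C.powerset, ∑ T ∈ C.powerset,
          (-1 : ℝ) ^ (C \ S).card * (if T ⊆ S then u T else 0) := by
        refine Finset.sum_congr rfl fun S hS => ?_
        rw [h S hS, step1 S hS, Finset.mul_sum]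
    _ = ∑ T ∈ C.powerset, u T *
          (∑ S ∈ C.powerset, if T ⊆ S then (-1 : ℝ) ^ (C \ S).card else 0) := by
        rw [Finset.sum_comm]
        refine Finset.sum_congr rfl fun T _ => ?_
        rw [Finset.mul_sum]
        refine Finset.sum_congr rfl fun S _ => ?_
        split <;> ring
    _ = u C := by
        have inner : ∀ T ∈ C.powerset,
            (∑ S ∈ C.powerset, if T ⊆ S then (-1 : ℝ) ^ (C \ S).card else 0)
            = if T = C then 1 else 0 := by
          intro T hT
          rw [mem_powerset] at hT
          rw [← Finset.sum_filter]
          have hbij : (∑ S ∈ C.powerset.filter (fun S => T ⊆ S),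
              (-1 : ℝ) ^ (C \ S).card)
              = ∑ R ∈ (C \ T).powerset, (-1 : ℝ) ^ R.card := by
            refine Finset.sum_nbij' (fun S => C \ S) (fun R => C \ R) ?_ ?_ ?_ ?_ ?_
            · intro S hS
              simp only [mem_filter, mem_powerset] at hS ⊢
              exact sdiff_subset_sdiff le_rfl hS.2
            · intro R hR
              simp only [mem_powerset] at hR
              simp only [mem_filter, mem_powerset]
              refine ⟨sdiff_subset, ?_⟩
              rw [subset_sdiff]
              exact ⟨hT, (Finset.sdiff_disjoint.mono_left hR).symm⟩
            · intro S hS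
              simp only [mem_filter, mem_powerset] at hS
              exact Finset.sdiff_sdiff_eq_self hS.1
            · intro R hR
              simp only [mem_powerset] at hR
              exact Finset.sdiff_sdiff_eq_self (hR.trans sdiff_subset)
            · intro S _; rfl
          rw [hbij, real_sum_powerset_neg_one_pow_card]
          by_cases hTC : T = C
          · subst hTC; simp
          · rw [if_neg hTC, if_neg (fun h => hTC
              (Finset.Subset.antisymm hT (Finset.sdiff_eq_empty_iff_subset.mp h)))]
        refine Eq.trans (Finset.sum_congr rfl fun T hT => by rw [inner T hT]) ?_
        simp only [mul_ite, mul_one, mul_zero]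
        rw [Finset.sum_ite_eq' C.powerset C u]
        simp

private lemma marg_congr {B : ℕ} (P : (Fin B → Bool) → ℝ) (j : Finset (Fin B))
    {x y : Fin B → Bool} (h : ∀ i ∈ j, x i = y i) :
    marg P j x = marg P j y := by
  unfold marg
  refine Finset.sum_congr rfl fun z _ => ?_
  refine if_congr ?_ rfl rfl
  constructor
  · intro hz i hi; rw [hz i hi, h i hi]
  · intro hz i hi; rw [hz i hi, h i hi]

private lemma marg_pos {B : ℕ} (P : (Fin B → Bool) → ℝ) (hpos : ∀ x, 0 < P x)
    (j : Finset (Fin B)) (x : Fin B → Bool) : 0 < marg P j x := by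
  unfold marg
  refine Finset.sum_pos' (fun z _ => ?_) ⟨x, Finset.mem_univ x, ?_⟩
  · split
    · exact (hpos z).le
    · exact le_rfl
  · rw [if_pos (fun i _ => rfl)]
    exact hpos x

/-- If a strictly positive distribution factorizes along the blocks of a
partition, then all cross-block interaction coefficients in its log-expansion
vanish. -/
theorem factorization_kills_cross_terms {B : ℕ}
    (π : Finpartition (Finset.univ : Finset (Fin B)))
    (P : (Fin B → Bool) → ℝ) (hpos : ∀ x, 0 < P x) (hsum : ∑ x, P x = 1)
    (hfact : ∀ x, P x = ∏ j ∈ π.parts, marg P j x)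
    (u : Finset (Fin B) → ℝ)
    (hexp : ∀ x, Real.log (P x) =
      ∑ C : Finset (Fin B), u C * ∏ i ∈ C, (if x i then (1:ℝ) else 0)) :
    ∀ C : Finset (Fin B), C.Nonempty → (∀ j ∈ π.parts, ¬ C ⊆ j) → u C = 0 := by
  classical
  intro C _hC hcross
  set ind : Finset (Fin B) → (Fin B → Bool) := fun S i => decide (i ∈ S) with hind
  set e : Finset (Fin B) → ℝ := fun S => Real.log (P (ind S)) with he
  set g : Finset (Fin B) → Finset (Fin B) → ℝ :=
    fun j S => Real.log (marg P j (ind S)) with hg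
  -- Step A: e S = ∑_{T ⊆ S} u T
  have stepA : ∀ S : Finset (Fin B), e S = ∑ T ∈ S.powerset, u T := by
    intro S
    have hprod : ∀ T : Finset (Fin B),
        (∏ i ∈ T, (if ind S i then (1:ℝ) else 0)) = if T ⊆ S then 1 else 0 := by
      intro T
      by_cases hTS : T ⊆ S
      · rw [if_pos hTS]
        refine Finset.prod_eq_one fun i hi => ?_
        simp [hind, hTS hi]
      · rw [if_neg hTS]
        obtain ⟨i, hiT, hiS⟩ := Finset.not_subset.mp hTS
        refine Finset.prod_eq_zero hiT ?_
        simp [hind, hiS]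
    rw [he]
    simp only [hexp (ind S), hprod, mul_ite, mul_one, mul_zero]
    rw [← Finset.sum_filter]
    congr 1
    ext T
    simp [Finset.mem_powerset]
  -- Step B: e S = ∑_{j ∈ parts} g j (S ∩ j)
  have stepB : ∀ S : Finset (Fin B), e S = ∑ j ∈ π.parts, g j (S ∩ j) := by
    intro S
    show Real.log (P (ind S)) = _
    rw [hfact (ind S), Real.log_prod
      (fun j _ => (marg_pos P hpos j (ind S)).ne')]
    refine Finset.sum_congr rfl fun j _ => ?_
    show _ = Real.log (marg P j (ind (S ∩ j)))
    congr 1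
    refine marg_congr P j fun i hi => ?_
    simp [hind, Finset.mem_inter, hi]
  -- Möbius inversion
  have hmob : u C = ∑ S ∈ C.powerset, (-1 : ℝ) ^ (C \ S).card * e S :=
    mobius_aux u e C (fun S _ => stepA S)
  rw [hmob]
  have : ∀ S ∈ C.powerset, (-1 : ℝ) ^ (C \ S).card * e S
      = ∑ j ∈ π.parts, (-1 : ℝ) ^ (C \ S).card * g j (S ∩ j) := by
    intro S _
    rw [stepB S, Finset.mul_sum]
  rw [Finset.sum_congr rfl this, Finset.sum_comm]
  refine Finset.sum_eq_zero fun j hj => ?_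
  obtain ⟨i, hiC, hij⟩ := Finset.not_subset.mp (hcross j hj)
  have hiCe : i ∉ C.erase i := Finset.notMem_erase i C
  have hCins : C = insert i (C.erase i) := (Finset.insert_erase hiC).symm
  rw [hCins, Finset.sum_powerset_insert hiCe, ← Finset.sum_add_distrib]
  refine Finset.sum_eq_zero fun S hS => ?_
  rw [Finset.mem_powerset] at hS
  have hiS : i ∉ S := fun h => hiCe (hS h)
  have hinter : insert i S ∩ j = S ∩ j := Finset.insert_inter_of_notMem hij
  have hcard : (insert i (C.erase i) \ S).card
      = (insert i (C.erase i) \ insert i S).card + 1 := by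
    have h1 : insert i (C.erase i) \ insert i S
        = (insert i (C.erase i) \ S).erase i := by
      rw [Finset.sdiff_insert]
    have h2 : i ∈ insert i (C.erase i) \ S := by
      rw [Finset.mem_sdiff]
      exact ⟨Finset.mem_insert_self i _, hiS⟩
    rw [h1, Finset.card_erase_of_mem h2]
    have : 1 ≤ (insert i (C.erase i) \ S).card :=
      Finset.card_pos.mpr ⟨i, h2⟩
    omega
  rw [hinter, hcard, pow_succ]
  ring
end

section
/- Conversely, let P be a strictly positive distribution on {0,1}^B whose log-expansion coefficients u_C (in the baseline-zero parametrization) vanish for every nonempty C not contained in any block of a partition {C_1,...,C_k} of {1,...,B}. Then the subvectors X_{C_1},...,X_{C_k} are mutually independent under P. -/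
open Finset

lemma sum_split {B : ℕ} (j t : Finset (Fin B)) (hdisj : Disjoint j t)
    (F G : (Fin B → Bool) → ℝ)
    (hF : ∀ z z' : Fin B → Bool, (∀ i ∈ j, z i = z' i) → F z = F z')
    (hG : ∀ z z' : Fin B → Bool, (∀ i ∈ t, z i = z' i) → G z = G z') :
    ∑ z : Fin B → Bool, (if ∀ i, i ∉ j → i ∉ t → z i = false then F z * G z else 0)
      = (∑ z : Fin B → Bool, if ∀ i, i ∉ j → z i = false then F z else 0) *
        (∑ z : Fin B → Bool, if ∀ i, i ∉ t → z i = false then G z else 0) := by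
  classical
  rw [← Finset.sum_filter, ← Finset.sum_filter, ← Finset.sum_filter, Finset.sum_mul_sum,
    ← Finset.sum_product']
  refine Finset.sum_nbij' (i := fun z => ((fun i => if i ∈ j then z i else false),
      (fun i => if i ∈ t then z i else false)))
    (j := fun p => fun i => p.1 i || p.2 i) ?_ ?_ ?_ ?_ ?_
  · intro z hz
    simp only [Finset.mem_filter, Finset.mem_univ, true_and] at hz ⊢
    rw [Finset.mem_product]
    constructor
    · simp only [Finset.mem_filter, Finset.mem_univ, true_and]
      intro i hi; simp [hi]
    · simp only [Finset.mem_filter, Finset.mem_univ, true_and]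
      intro i hi; simp [hi]
  · intro p hp
    rw [Finset.mem_product] at hp
    simp only [Finset.mem_filter, Finset.mem_univ, true_and] at hp ⊢
    intro i hij hit
    simp [hp.1 i hij, hp.2 i hit]
  · intro z hz
    simp only [Finset.mem_filter, Finset.mem_univ, true_and] at hz
    funext i
    by_cases hij : i ∈ j
    · have hit : i ∉ t := Finset.disjoint_left.mp hdisj hij
      simp [hij, hit]
    · by_cases hit : i ∈ t
      · simp [hij, hit]
      · simp [hij, hit, hz i hij hit]
  · intro p hp
    rw [Finset.mem_product] at hp
    simp only [Finset.mem_filter, Finset.mem_univ, true_and] at hp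
    obtain ⟨h1, h2⟩ := hp
    have e1 : (fun i => if i ∈ j then p.1 i || p.2 i else false) = p.1 := by
      funext i
      by_cases hij : i ∈ j
      · have hit : i ∉ t := Finset.disjoint_left.mp hdisj hij
        simp [hij, h2 i hit]
      · simp [hij, h1 i hij]
    have e2 : (fun i => if i ∈ t then p.1 i || p.2 i else false) = p.2 := by
      funext i
      by_cases hit : i ∈ t
      · have hij : i ∉ j := Finset.disjoint_right.mp hdisj hit
        simp [hit, h1 i hij]
      · simp [hit, h2 i hit]
    exact Prod.ext e1 e2
  · intro z hz
    have e1 : F z = F (fun i => if i ∈ j then z i else false) := by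
      apply hF; intro i hi; simp [hi]
    have e2 : G z = G (fun i => if i ∈ t then z i else false) := by
      apply hG; intro i hi; simp [hi]
    rw [e1, e2]

lemma sum_prod_split {B : ℕ} (s : Finset (Finset (Fin B)))
    (hdisj : (↑s : Set (Finset (Fin B))).PairwiseDisjoint id)
    (f : Finset (Fin B) → (Fin B → Bool) → ℝ)
    (hf : ∀ j ∈ s, ∀ z z' : Fin B → Bool, (∀ i ∈ j, z i = z' i) → f j z = f j z') :
    ∑ z : Fin B → Bool, (if ∀ i, i ∉ s.sup id → z i = false then ∏ j ∈ s, f j z else 0)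
      = ∏ j ∈ s, ∑ z : Fin B → Bool, (if ∀ i, i ∉ j → z i = false then f j z else 0) := by
  classical
  induction s using Finset.induction_on with
  | empty =>
    simp only [Finset.sup_empty, Finset.prod_empty]
    have h : ∀ z : Fin B → Bool,
        (if ∀ i, i ∉ (⊥ : Finset (Fin B)) → z i = false then (1:ℝ) else 0)
        = if z = (fun _ => false) then 1 else 0 := by
      intro z
      congr 1
      simp only [eq_iff_iff]
      constructor
      · intro h; funext i; exact h i (Finset.notMem_empty i)
      · intro h i _; rw [h]
    rw [Finset.sum_congr rfl (fun z _ => h z)]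
    simp
  | @insert j s hj ih =>
    have hdisj' : (↑s : Set (Finset (Fin B))).PairwiseDisjoint id :=
      hdisj.subset (Finset.coe_subset.mpr (Finset.subset_insert j s))
    have hf' : ∀ j' ∈ s, ∀ z z' : Fin B → Bool, (∀ i ∈ j', z i = z' i) → f j' z = f j' z' :=
      fun j' hj' => hf j' (Finset.mem_insert_of_mem hj')
    have hjd : Disjoint j (s.sup id) := by
      rw [Finset.disjoint_sup_right]
      intro i hi
      exact hdisj (Finset.mem_insert_self j s) (Finset.mem_insert_of_mem hi)
        (fun h => hj (h ▸ hi))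
    have hGdep : ∀ z z' : Fin B → Bool, (∀ i ∈ s.sup id, z i = z' i) →
        (∏ j' ∈ s, f j' z) = ∏ j' ∈ s, f j' z' := by
      intro z z' hzz
      refine Finset.prod_congr rfl (fun j' hj' => hf' j' hj' z z' ?_)
      intro i hi
      exact hzz i (Finset.mem_sup.mpr ⟨j', hj', hi⟩)
    have key := sum_split j (s.sup id) hjd (f j) (fun z => ∏ j' ∈ s, f j' z)
      (hf j (Finset.mem_insert_self j s)) hGdep
    rw [Finset.prod_insert hj, ← ih hdisj' hf', ← key]
    apply Finset.sum_congr rfl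
    intro z _
    congr 1
    · simp only [eq_iff_iff, Finset.sup_insert, id_eq, Finset.sup_eq_union,
        Finset.mem_union, not_or]
      constructor
      · intro h i h1 h2
        exact h i ⟨h1, h2⟩
      · intro h i hi
        exact h i hi.1 hi.2
    · rw [Finset.prod_insert hj]

lemma sum_shift {B : ℕ} (j : Finset (Fin B)) (G : (Fin B → Bool) → ℝ)
    (hG : ∀ z z' : Fin B → Bool, (∀ i, i ∉ j → z i = z' i) → G z = G z') (x : Fin B → Bool) :
    ∑ z : Fin B → Bool, (if ∀ i ∈ j, z i = x i then G z else 0)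
      = ∑ z : Fin B → Bool, (if ∀ i ∈ j, z i = false then G z else 0) := by
  classical
  set e : (Fin B → Bool) → (Fin B → Bool) :=
    fun z i => if i ∈ j then xor (z i) (x i) else z i with he
  have hinv : Function.Involutive e := by
    intro z; funext i; by_cases hi : i ∈ j <;> simp [he, hi]
  refine Fintype.sum_bijective e hinv.bijective _ _ ?_
  intro z
  have hcond : (∀ i ∈ j, z i = x i) ↔ (∀ i ∈ j, e z i = false) := by
    constructor
    · intro h i hi; simp [he, hi, h i hi]
    · intro h i hi; have := h i hi; simp only [he, hi, if_pos] at this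
      simpa using this
  have hval : G z = G (e z) := hG _ _ (fun i hi => by simp [he, hi])
  by_cases h : ∀ i ∈ j, z i = x i
  · rw [if_pos h, if_pos (hcond.mp h), hval]
  · rw [if_neg h, if_neg (fun hc => h (hcond.mpr hc))]

/-- Conversely, if all cross-block interaction coefficients vanish, the block
subvectors are mutually independent. -/
theorem cross_terms_zero_implies_independence {B : ℕ}
    (π : Finpartition (Finset.univ : Finset (Fin B)))
    (P : (Fin B → Bool) → ℝ) (hpos : ∀ x, 0 < P x) (hsum : ∑ x, P x = 1)
    (u : Finset (Fin B) → ℝ)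
    (hexp : ∀ x, Real.log (P x) =
      ∑ C : Finset (Fin B), u C * ∏ i ∈ C, (if x i then (1:ℝ) else 0))
    (hvanish : ∀ C : Finset (Fin B), C.Nonempty →
      (∀ j ∈ π.parts, ¬ C ⊆ j) → u C = 0) :
    ∀ x, P x = ∏ j ∈ π.parts, marg P j x := by
  classical
  intro x
  set w : Finset (Fin B) → (Fin B → Bool) → ℝ :=
    fun C z => ∏ i ∈ C, (if z i then (1:ℝ) else 0) with hw
  set f : Finset (Fin B) → (Fin B → Bool) → ℝ :=
    fun j z => Real.exp (∑ C ∈ j.powerset.erase ∅, u C * w C z) with hfdef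
  have hfdep : ∀ j : Finset (Fin B), ∀ z z' : Fin B → Bool,
      (∀ i ∈ j, z i = z' i) → f j z = f j z' := by
    intro j z z' hzz
    simp only [hfdef]
    congr 1
    refine Finset.sum_congr rfl (fun C hC => ?_)
    have hCj : C ⊆ j := Finset.mem_powerset.mp (Finset.mem_of_mem_erase hC)
    congr 1
    exact Finset.prod_congr rfl (fun i hi => by rw [hzz i (hCj hi)])
  have hfpos : ∀ (j : Finset (Fin B)) (z : Fin B → Bool), 0 < f j z :=
    fun j z => Real.exp_pos _
  -- Step 1 : factorization of P
  have hP : ∀ z, P z = Real.exp (u ∅) * ∏ j ∈ π.parts, f j z := by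
    intro z
    have hlog : Real.log (P z)
        = u ∅ + ∑ j ∈ π.parts, ∑ C ∈ j.powerset.erase ∅, u C * w C z := by
      rw [hexp z]
      have hzero : ∀ C ∈ (Finset.univ : Finset (Finset (Fin B))),
          C ∉ insert ∅ (π.parts.biUnion fun j => j.powerset.erase ∅) → u C * w C z = 0 := by
        intro C _ hC
        simp only [Finset.mem_insert, Finset.mem_biUnion, not_or, not_exists] at hC
        push_neg at hC
        obtain ⟨hne, hnb⟩ := hC
        have hCne : C.Nonempty := hne
        have hu : u C = 0 := by
          apply hvanish C hCne
          intro j hj hCj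
          exact hnb j hj (Finset.mem_erase.mpr ⟨hCne.ne_empty, Finset.mem_powerset.mpr hCj⟩)
        rw [hu, zero_mul]
      rw [← Finset.sum_subset (Finset.subset_univ _) hzero]
      have hni : (∅ : Finset (Fin B)) ∉ π.parts.biUnion fun j => j.powerset.erase ∅ := by
        simp
      rw [Finset.sum_insert hni]
      have hpd : (↑π.parts : Set (Finset (Fin B))).PairwiseDisjoint
          (fun j => j.powerset.erase (∅ : Finset (Fin B))) := by
        intro a ha b hb hab
        simp only [Function.onFun]
        rw [Finset.disjoint_left]
        intro C hCa hCb
        rw [Finset.mem_erase, Finset.mem_powerset] at hCa hCb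
        obtain ⟨a0, ha0⟩ := Finset.nonempty_iff_ne_empty.mpr hCa.1
        exact Finset.disjoint_left.mp (π.disjoint ha hb hab) (hCa.2 ha0) (hCb.2 ha0)
      rw [Finset.sum_biUnion hpd]
      simp [hw]
    rw [← Real.exp_log (hpos z), hlog, Real.exp_add, Real.exp_sum]
  set T : Finset (Fin B) → ℝ :=
    fun j => ∑ z : Fin B → Bool, (if ∀ i, i ∉ j → z i = false then f j z else 0) with hTdef
  have hTpos : ∀ j, 0 < T j := by
    intro j
    refine Finset.sum_pos' (fun z _ => ?_) ⟨fun _ => false, Finset.mem_univ _, ?_⟩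
    · split
      · exact (hfpos j z).le
      · exact le_refl 0
    · rw [if_pos (fun i _ => rfl)]
      exact hfpos j _
  have hnorm : Real.exp (u ∅) * ∏ j ∈ π.parts, T j = 1 := by
    have h1 : ∑ z : Fin B → Bool, P z = Real.exp (u ∅) * ∏ j ∈ π.parts, T j := by
      calc ∑ z : Fin B → Bool, P z
          = ∑ z : Fin B → Bool, Real.exp (u ∅) * ∏ j ∈ π.parts, f j z :=
            Finset.sum_congr rfl (fun z _ => hP z)
        _ = Real.exp (u ∅) * ∑ z : Fin B → Bool, ∏ j ∈ π.parts, f j z := by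
            rw [Finset.mul_sum]
        _ = Real.exp (u ∅) * ∑ z : Fin B → Bool,
              (if ∀ i, i ∉ π.parts.sup id → z i = false then ∏ j ∈ π.parts, f j z else 0) := by
            congr 1
            refine Finset.sum_congr rfl (fun z _ => ?_)
            rw [if_pos]
            intro i hi
            exact absurd (by rw [π.sup_parts]; exact Finset.mem_univ i) hi
        _ = Real.exp (u ∅) * ∏ j ∈ π.parts, T j := by
            rw [sum_prod_split π.parts π.disjoint f (fun j _ => hfdep j)]
    rw [← h1, hsum]
  have hmarg : ∀ j ∈ π.parts,
      marg P j x = Real.exp (u ∅) * f j x * ∏ j' ∈ π.parts.erase j, T j' := by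
    intro j hj
    have hjdisj : ∀ j' ∈ π.parts.erase j, Disjoint j j' := fun j' hj' =>
      π.disjoint hj (Finset.mem_of_mem_erase hj') (Ne.symm (Finset.ne_of_mem_erase hj'))
    have hGdep : ∀ z z' : Fin B → Bool, (∀ i, i ∉ j → z i = z' i) →
        (∏ j' ∈ π.parts.erase j, f j' z) = ∏ j' ∈ π.parts.erase j, f j' z' := by
      intro z z' hzz
      refine Finset.prod_congr rfl (fun j' hj' => hfdep j' z z' (fun i hi => hzz i ?_))
      exact Finset.disjoint_right.mp (hjdisj j' hj') hi
    calc marg P j x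
        = ∑ z : Fin B → Bool, (if ∀ i ∈ j, z i = x i then
            Real.exp (u ∅) * f j x * ∏ j' ∈ π.parts.erase j, f j' z else 0) := by
          rw [marg]
          refine Finset.sum_congr rfl (fun z _ => ?_)
          split
          case isTrue h =>
            rw [hP z, ← Finset.mul_prod_erase π.parts (fun j' => f j' z) hj,
              hfdep j z x h]
            ring
          case isFalse h => rfl
      _ = Real.exp (u ∅) * f j x * ∑ z : Fin B → Bool, (if ∀ i ∈ j, z i = x i then
            ∏ j' ∈ π.parts.erase j, f j' z else 0) := by
          rw [Finset.mul_sum]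
          refine Finset.sum_congr rfl (fun z _ => ?_)
          split <;> simp
      _ = Real.exp (u ∅) * f j x * ∑ z : Fin B → Bool, (if ∀ i ∈ j, z i = false then
            ∏ j' ∈ π.parts.erase j, f j' z else 0) := by
          rw [sum_shift j _ hGdep x]
      _ = Real.exp (u ∅) * f j x * ∏ j' ∈ π.parts.erase j, T j' := by
          congr 1
          have hcomp : ∀ i : Fin B, i ∉ (π.parts.erase j).sup id ↔ i ∈ j := by
            intro i
            constructor
            · intro hi
              have hm : i ∈ π.parts.sup id := by
                rw [π.sup_parts]; exact Finset.mem_univ i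
              rw [← Finset.insert_erase hj, Finset.sup_insert] at hm
              rcases Finset.mem_union.mp (by rwa [Finset.sup_eq_union] at hm) with h | h
              · exact h
              · exact absurd h hi
            · intro hi hsup
              obtain ⟨j', hj', hij'⟩ := Finset.mem_sup.mp hsup
              exact Finset.disjoint_left.mp (hjdisj j' hj') hi hij'
          rw [← sum_prod_split (π.parts.erase j)
            (π.disjoint.subset (Finset.coe_subset.mpr (Finset.erase_subset j π.parts))) f
            (fun j' _ => hfdep j')]
          refine Finset.sum_congr rfl (fun z _ => ?_)
          congr 1
          simp only [eq_iff_iff]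
          constructor
          · intro h i hi
            exact h i ((hcomp i).mp hi)
          · intro h i hi
            exact h i ((hcomp i).mpr hi)
  have hT' : ∀ j ∈ π.parts,
      Real.exp (u ∅) * ∏ j' ∈ π.parts.erase j, T j' = (T j)⁻¹ := by
    intro j hj
    have h2 : (Real.exp (u ∅) * ∏ j' ∈ π.parts.erase j, T j') * T j = 1 := by
      rw [← hnorm, ← Finset.mul_prod_erase π.parts T hj]
      ring
    exact eq_inv_of_mul_eq_one_left h2
  have hprodT : (∏ j ∈ π.parts, T j)⁻¹ = Real.exp (u ∅) :=
    (eq_inv_of_mul_eq_one_left hnorm).symm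
  calc P x = Real.exp (u ∅) * ∏ j ∈ π.parts, f j x := hP x
    _ = (∏ j ∈ π.parts, f j x) * (∏ j ∈ π.parts, T j)⁻¹ := by rw [hprodT]; ring
    _ = ∏ j ∈ π.parts, (f j x * (T j)⁻¹) := by
        rw [Finset.prod_mul_distrib, ← Finset.prod_inv_distrib]
    _ = ∏ j ∈ π.parts, marg P j x := by
        refine Finset.prod_congr rfl (fun j hj => ?_)
        rw [hmarg j hj, mul_comm (Real.exp (u ∅)) (f j x), mul_assoc, hT' j hj]
end
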